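/- arXiv:1010.1826 — 2 statements merged into one kernel-verified Lean document; each statement's English description precedes it below -/
import Mathlib

section
/- If β0γ is an element of a cut C of the infinite complete binary tree, then there exists a unique natural number k such that β1 0^k (the string β followed by 1 followed by k zeros) is in C. -/
/-- `l` is a prefix of the infinite binary sequence `f`. -/
def IsPrefixOfSeq (l : List Bool) (f : ℕ → Bool) : Prop :=
  ∀ i : Fin l.length, l.get i = f i

/-- A cut of the infinite complete binary tree: a finite set of binary strings such that
every infinite binary sequence has exactly one element of the cut as a prefix. -/
def IsCut (C : Finset (List Bool)) : Prop :=
  ∀ f : ℕ → Bool, ∃! c, c ∈ C ∧ IsPrefixOfSeq c f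

lemma prefSeq_of_prefix {c d : List Bool} {f : ℕ → Bool} (h : c <+: d)
    (hd : IsPrefixOfSeq d f) : IsPrefixOfSeq c f := by
  obtain ⟨t, rfl⟩ := h
  intro i
  have hi : (i : ℕ) < c.length := i.2
  have := hd ⟨i, by simp; omega⟩
  simp only [List.get_eq_getElem] at this ⊢
  rw [← this, List.getElem_append_left hi]

lemma prefix_of_prefSeq {c d : List Bool} {f : ℕ → Bool} (hc : IsPrefixOfSeq c f)
    (hd : IsPrefixOfSeq d f) (hl : c.length ≤ d.length) : c <+: d := by
  have hcd : c = d.take c.length := by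
    apply List.ext_get (by simp [hl])
    intro i h1 h2
    have e1 := hc ⟨i, h1⟩
    have e2 := hd ⟨i, lt_of_lt_of_le h1 hl⟩
    simp only [List.get_eq_getElem] at e1 e2
    simp only [List.get_eq_getElem, List.getElem_take, e1, e2]
  rw [hcd]; exact List.take_prefix _ _

/-- If β0γ is in a cut C, then there is a unique k such that β1 0^k is in C.
(0 = `false`, 1 = `true`.) -/
theorem stmt1 (C : Finset (List Bool)) (hC : IsCut C) (β γ : List Bool)
    (h : β ++ false :: γ ∈ C) :
    ∃! k : ℕ, β ++ true :: List.replicate k false ∈ C := by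
  classical
  set f : ℕ → Bool := fun n => if hn : n < β.length then β.get ⟨n, hn⟩
    else decide (n = β.length) with hf
  have hA : ∀ k : ℕ, IsPrefixOfSeq (β ++ true :: List.replicate k false) f := by
    intro k i
    have hi : (i : ℕ) < β.length + (k + 1) := by
      have := i.2; simpa [List.length_append] using this
    simp only [List.get_eq_getElem, hf]
    rcases lt_trichotomy (i : ℕ) β.length with hlt | heq | hgt
    · rw [List.getElem_append_left hlt]
      simp [hlt]
    · have : ¬ ((i : ℕ) < β.length) := by omega
      rw [List.getElem_append_right (le_of_eq heq.symm)]
      simp [heq, this]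
    · have hle : β.length ≤ (i : ℕ) := le_of_lt hgt
      have : ¬ ((i : ℕ) < β.length) := by omega
      rw [List.getElem_append_right hle]
      have h1 : (i : ℕ) - β.length ≠ 0 := by omega
      have h2 : (i : ℕ) ≠ β.length := by omega
      rcases Nat.exists_eq_succ_of_ne_zero h1 with ⟨m, hm⟩
      simp [hm, this, h2]
  obtain ⟨c, ⟨hcC, hcf⟩, huniq⟩ := hC f
  -- β is a prefix of f
  have hβf : IsPrefixOfSeq β f := by
    intro i
    show β.get i = dite _ _ _
    rw [dif_pos i.2]
  -- c is longer than β
  have hlen : β.length < c.length := by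
    by_contra hle
    push_neg at hle
    have hcβ : c <+: β := prefix_of_prefSeq hcf hβf hle
    set g : ℕ → Bool := fun n =>
      if hn : n < (β ++ false :: γ).length then (β ++ false :: γ).get ⟨n, hn⟩ else false with hgdef
    have hβγg : IsPrefixOfSeq (β ++ false :: γ) g := by
      intro i
      show (β ++ false :: γ).get i = dite _ _ _
      rw [dif_pos i.2]
    have hcg : IsPrefixOfSeq c g :=
      prefSeq_of_prefix (hcβ.trans ⟨false :: γ, rfl⟩) hβγg
    obtain ⟨d, _, hdu⟩ := hC g
    have h1 : c = d := hdu c ⟨hcC, hcg⟩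
    have h2 : β ++ false :: γ = d := hdu _ ⟨h, hβγg⟩
    have : c = β ++ false :: γ := h1.trans h2.symm
    have : c.length = β.length + γ.length + 1 := by
      rw [this]; simp [List.length_append]; omega
    omega
  set k := c.length - β.length - 1 with hk
  have hklen : (β ++ true :: List.replicate k false).length = c.length := by
    simp [List.length_append]; omega
  have hceq : c = β ++ true :: List.replicate k false := by
    have h1 : c <+: β ++ true :: List.replicate k false :=
      prefix_of_prefSeq hcf (hA k) (le_of_eq hklen.symm)
    exact h1.eq_of_length hklen.symm
  refine ⟨k, by show β ++ true :: List.replicate k false ∈ C; rw [← hceq]; exact hcC, ?_⟩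
  intro k' hk'
  have : β ++ true :: List.replicate k' false = c := huniq _ ⟨hk', hA k'⟩
  have hlen' : β.length + k' + 1 = c.length := by
    rw [← this]; simp [List.length_append]; omega
  omega
end

section
/- Let D be a prefix-closed set of strings over a finite rule alphabet R with probabilities P : R → (0,1], and suppose for all p > 0 the set of strings in D with probability ≥ p is finite. Consider a best-first search that maintains a priority queue of elements of D ordered by probability, starts from the empty string, and at each step removes the highest-probability element w and inserts all one-rule extensions wr ∈ D. Then for every w ∈ D, the string w is the removed (top-ranked) element at some finite step. -/
/-- Completeness of the best-first (priority queue) search: starting from the empty string,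
repeatedly removing a maximum-probability queue element and inserting all its one-rule
extensions in D, every element of D is eventually the removed (top-ranked) element,
provided that for every p > 0 only finitely many strings in D have probability ≥ p. -/
theorem stmt6 {R : Type*} [Fintype R] [DecidableEq R] (P : R → ℝ)
    (hP : ∀ r, 0 < P r ∧ P r ≤ 1)
    (D : Set (List R)) [DecidablePred (· ∈ D)]
    (hD : ([] : List R) ∈ D)
    (hpc : ∀ w ∈ D, ∀ q : List R, q <+: w → q ∈ D)
    (hfin : ∀ p : ℝ, 0 < p → {w ∈ D | p ≤ (w.map P).prod}.Finite)
    (Q : ℕ → Finset (List R)) (t : ℕ → List R)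
    (hQ0 : Q 0 = {([] : List R)})
    (hQD : ∀ n, ∀ w ∈ Q n, w ∈ D)
    (htop : ∀ n, Q n ≠ ∅ →
      t n ∈ Q n ∧ ∀ w ∈ Q n, (w.map P).prod ≤ ((t n).map P).prod)
    (hstep : ∀ n, Q n ≠ ∅ →
      Q (n + 1) = (Q n).erase (t n) ∪
        (Finset.univ.filter (fun r : R => t n ++ [r] ∈ D)).image (fun r => t n ++ [r])) :
    ∀ w ∈ D, ∃ n : ℕ, Q n ≠ ∅ ∧ t n = w := by
  classical
  -- Key lemma: if w ∈ D is ever in the queue, it is eventually removed.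
  have removal : ∀ w ∈ D, (∃ N, w ∈ Q N) → ∃ n, Q n ≠ ∅ ∧ t n = w := by
    rintro w hw ⟨N, hN⟩
    by_contra hcon
    push_neg at hcon
    -- hcon : ∀ n, Q n ≠ ∅ → t n ≠ w
    -- persistence of w in the queue
    have pers : ∀ k, w ∈ Q (N + k) := by
      intro k
      induction k with
      | zero => simpa using hN
      | succ k ih =>
        have hne : Q (N + k) ≠ ∅ := Finset.ne_empty_of_mem ih
        have htw : t (N + k) ≠ w := hcon _ (Finset.nonempty_iff_ne_empty.mpr hne)
        rw [show N + (k+1) = (N + k) + 1 by omega, hstep _ hne]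
        exact Finset.mem_union_left _ (Finset.mem_erase.mpr ⟨Ne.symm htw, ih⟩)
    have persm : ∀ m, N ≤ m → w ∈ Q m := by
      intro m hm
      have := pers (m - N)
      rwa [Nat.add_sub_cancel' hm] at this
    have hQne : ∀ m, N ≤ m → Q m ≠ ∅ := fun m hm => Finset.ne_empty_of_mem (persm m hm)
    set p := (w.map P).prod with hp_def
    have hp : 0 < p := by
      apply List.prod_pos
      intro x hx
      obtain ⟨r, _, rfl⟩ := List.mem_map.mp hx
      exact (hP r).1
    have hSfin := hfin p hp
    set T : List R → Set ℕ := fun v => {m | N ≤ m ∧ t m = v} with hT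
    -- after v is removed it leaves the queue
    have L1 : ∀ v, ∀ m ∈ T v, v ∉ Q (m + 1) := by
      rintro v m ⟨hNm, htv⟩ hmem
      rw [hstep m (hQne m hNm)] at hmem
      rcases Finset.mem_union.mp hmem with h | h
      · exact (Finset.mem_erase.mp h).1 htv.symm
      · obtain ⟨r, _, hr⟩ := Finset.mem_image.mp h
        rw [htv] at hr
        have := congrArg List.length hr
        simp at this
    -- if v re-enters the queue, its parent was just removed
    have L2 : ∀ v m, N ≤ m → v ∉ Q m → v ∈ Q (m + 1) → v ≠ [] ∧ m ∈ T v.dropLast := by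
      intro v m hNm hnot hmem
      rw [hstep m (hQne m hNm)] at hmem
      rcases Finset.mem_union.mp hmem with h | h
      · exact absurd (Finset.mem_of_mem_erase h) hnot
      · obtain ⟨r, _, hr⟩ := Finset.mem_image.mp h
        constructor
        · rw [← hr]; simp
        · refine ⟨hNm, ?_⟩
          rw [← hr]; simp
    -- a membership flip exists between non-membership and membership
    have flip : ∀ (v : List R) (a b : ℕ), a ≤ b → v ∉ Q a → v ∈ Q b →
        ∃ m, a ≤ m ∧ m < b ∧ v ∉ Q m ∧ v ∈ Q (m + 1) := by
      intro v a b hab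
      obtain ⟨k, rfl⟩ := Nat.exists_eq_add_of_le hab
      clear hab
      induction k with
      | zero => intro h hs; exact absurd hs h
      | succ k ih =>
        intro h hs
        by_cases hk : v ∈ Q (a + k)
        · obtain ⟨m, h1, h2, h3, h4⟩ := ih h hk
          exact ⟨m, h1, by omega, h3, h4⟩
        · exact ⟨a + k, Nat.le_add_right a k, by omega, hk,
            by rwa [show a + (k+1) = (a+k) + 1 by omega] at hs⟩
    -- between two removals of v, its parent is removed
    have key : ∀ v, ∀ m1 ∈ T v, ∀ m2 ∈ T v, m1 < m2 →
        v ≠ [] ∧ ∃ m ∈ T v.dropLast, m1 < m := by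
      intro v m1 hm1 m2 hm2 h12
      have h1 : v ∉ Q (m1 + 1) := L1 v m1 hm1
      have h2 : v ∈ Q m2 := hm2.2 ▸ (htop m2 (hQne m2 hm2.1)).1
      obtain ⟨m, hma, hmb, hmc, hmd⟩ := flip v (m1 + 1) m2 h12 h1 h2
      have hNm : N ≤ m := le_trans (le_trans hm1.1 (Nat.le_succ m1)) hma
      obtain ⟨hv, hmT⟩ := L2 v m hNm hmc hmd
      exact ⟨hv, m, hmT, by omega⟩
    -- each v is removed only finitely often
    have Tfin : ∀ (k : ℕ) (v : List R), v.length ≤ k → (T v).Finite := by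
      intro k
      induction k with
      | zero =>
        intro v hv
        by_contra hinf
        replace hinf : (T v).Infinite := hinf
        obtain ⟨m1, hm1⟩ := hinf.nonempty
        obtain ⟨m2, hm2, h12⟩ := hinf.exists_gt m1
        obtain ⟨hne, _⟩ := key v m1 hm1 m2 hm2 h12
        exact hne (List.length_eq_zero_iff.mp (Nat.le_zero.mp hv))
      | succ k ih =>
        intro v hv
        by_contra hinf
        replace hinf : (T v).Infinite := hinf
        have hdl : (T v.dropLast).Finite := ih v.dropLast (by rw [List.length_dropLast]; omega)
        obtain ⟨B, hB⟩ := hdl.bddAbove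
        obtain ⟨m1, hm1, hBm1⟩ := hinf.exists_gt B
        obtain ⟨m2, hm2, h12⟩ := hinf.exists_gt m1
        obtain ⟨_, m, hmT, hmm⟩ := key v m1 hm1 m2 hm2 h12
        have := hB hmT
        omega
    -- pigeonhole: all steps ≥ N remove elements of the finite set S
    have hsub : Set.Ici N ⊆ ⋃ v ∈ hSfin.toFinset, T v := by
      intro m hm
      have hm' : N ≤ m := hm
      have hne := hQne m hm'
      obtain ⟨htm, hmax⟩ := htop m hne
      have htD : t m ∈ D := hQD m _ htm
      have hple : p ≤ ((t m).map P).prod := hmax w (persm m hm')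
      simp only [Set.mem_iUnion]
      exact ⟨t m, by rw [Set.Finite.mem_toFinset]; exact ⟨htD, hple⟩, hm', rfl⟩
    have hfin2 : (⋃ v ∈ hSfin.toFinset, T v).Finite :=
      Set.Finite.biUnion hSfin.toFinset.finite_toSet (fun v _ => Tfin v.length v le_rfl)
    exact (Set.Ici_infinite N).mono hsub hfin2
  -- main induction: every element of D enters the queue
  suffices H : ∀ k, ∀ w ∈ D, w.length ≤ k → ∃ n, Q n ≠ ∅ ∧ t n = w by
    intro w hw; exact H w.length w hw le_rfl
  intro k
  induction k with
  | zero =>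
    intro w hw hl
    have : w = [] := List.length_eq_zero_iff.mp (Nat.le_zero.mp hl)
    subst this
    exact removal [] hw ⟨0, by rw [hQ0]; exact Finset.mem_singleton_self []⟩
  | succ k ih =>
    intro w hw hl
    rcases List.eq_nil_or_concat w with rfl | ⟨u, r, rfl⟩
    · exact removal [] hw ⟨0, by rw [hQ0]; exact Finset.mem_singleton_self []⟩
    · have hu : u ∈ D := hpc _ hw u ⟨[r], List.concat_eq_append.symm⟩
      obtain ⟨m, hm, htm⟩ := ih u hu (by simp [List.length_concat] at hl; omega)
      apply removal _ hw
      refine ⟨m + 1, ?_⟩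
      rw [hstep m hm]
      apply Finset.mem_union_right
      apply Finset.mem_image.mpr
      refine ⟨r, Finset.mem_filter.mpr ⟨Finset.mem_univ r, ?_⟩, ?_⟩
      · rw [htm, ← List.concat_eq_append]; exact hw
      · rw [htm, ← List.concat_eq_append]
end
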